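/- Let X and Y be Banach spaces, let F : X ⇒ Y be a set-valued mapping with (x̄, ȳ) ∈ gph F whose graph has a closed intersection with some neighborhood of (x̄, ȳ), and let G : X → Y. If reg F(x̄|ȳ) < κ < ∞ and lip G(x̄) < λ < κ⁻¹, then reg(F + G)(x̄ | ȳ + G(x̄)) < (κ⁻¹ − λ)⁻¹. -/

import Mathlib

set_option maxHeartbeats 1000000


open Metric Filter

/-- The modulus of metric regularity `reg F(xbar|ybar)` (infimum of constants `κ` with
`d(x, F⁻¹(y)) ≤ κ d(y, F(x))` near `(xbar, ybar)`; `⊤` if no such constant exists). -/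
noncomputable def regModulus {X Y : Type*} [NormedAddCommGroup X] [NormedAddCommGroup Y]
    (F : X → Set Y) (xbar : X) (ybar : Y) : ENNReal :=
  ⨅ (κ : NNReal) (_ : ∃ ε > (0 : ℝ), ∀ x ∈ ball xbar ε, ∀ y ∈ ball ybar ε,
      EMetric.infEdist x {x' | y ∈ F x'} ≤ (κ : ENNReal) * EMetric.infEdist y (F x)),
    (κ : ENNReal)

/-- The Lipschitz modulus `lip G(xbar)` of `G : X → Y` at `xbar`: the infimum of constants
`l` such that `G` is Lipschitz with constant `l` on some neighborhood of `xbar`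
(equivalently, the limsup of `‖G x' - G x‖ / ‖x' - x‖` as `x, x' → xbar`). -/
noncomputable def lipModulus {X Y : Type*} [NormedAddCommGroup X] [NormedAddCommGroup Y]
    (G : X → Y) (xbar : X) : ENNReal :=
  ⨅ (l : NNReal) (_ : ∃ ε > (0 : ℝ), ∀ x ∈ ball xbar ε, ∀ x' ∈ ball xbar ε,
      ‖G x' - G x‖ ≤ (l : ℝ) * ‖x' - x‖), (l : ENNReal)

/-- Lyusternik–Graves-type perturbation theorem (Theorem 3.1): if `gph F` has a closed
intersection with a neighborhood of `(xbar, ybar)`, `reg F(xbar|ybar) < κ < ∞` and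
`lip G(xbar) < λ < κ⁻¹`, then `reg (F + G)(xbar | ybar + G xbar) < (κ⁻¹ - λ)⁻¹`. -/


private lemma geo_sum_le' {r : ℝ} (h0 : 0 ≤ r) (h1 : r < 1) (n : ℕ) :
    ∑ j ∈ Finset.range n, r ^ j ≤ 1 / (1 - r) := by
  have h2 : 0 < 1 - r := by linarith
  rw [geom_sum_eq (by linarith : r ≠ 1)]
  rw [show (r ^ n - 1) / (r - 1) = (1 - r ^ n) / (1 - r) by
    rw [← neg_div_neg_eq]; ring_nf]
  have h3 : 1 - r ^ n ≤ 1 := by nlinarith [pow_nonneg h0 n]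
  gcongr

private lemma key_exists {X Y : Type*} [NormedAddCommGroup X] [CompleteSpace X]
    [NormedAddCommGroup Y]
    (F : X → Set Y) (G : X → Y) (xbar : X) (ybar : Y) (ε₀ : ℝ)
    (κ'' lr : ℝ) (hκ'' : 0 < κ'') (hlr : 0 ≤ lr) (hθ1 : κ'' * lr < 1)
    (hreg : ∀ x ∈ ball xbar ε₀, ∀ yy ∈ ball ybar ε₀, (F x).Nonempty →
      ∀ η > (0:ℝ), ∃ x', yy ∈ F x' ∧ dist x x' ≤ κ'' * infDist yy (F x) + η)
    (hlip : ∀ x ∈ ball xbar ε₀, ∀ x' ∈ ball xbar ε₀, ‖G x' - G x‖ ≤ lr * ‖x' - x‖)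
    (K : Set (X × Y)) (hK : IsClosed K)
    (hKsub : ∀ p ∈ K, p.2 ∈ F p.1)
    (hKmem : ∀ x ∈ ball xbar ε₀, ∀ yy ∈ ball ybar ε₀, yy ∈ F x → (x, yy) ∈ K)
    (y : Y) (x₀ : X) (hne : (F x₀).Nonempty) (σ : ℝ) (hσ : 0 < σ)
    (hloc : ∀ z : X, dist x₀ z ≤ κ'' / (1 - κ'' * lr) * infDist (y - G x₀) (F x₀) + σ →
      z ∈ ball xbar ε₀ ∧ y - G z ∈ ball ybar ε₀) :
    ∃ x', y - G x' ∈ F x' ∧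
      dist x₀ x' ≤ κ'' / (1 - κ'' * lr) * infDist (y - G x₀) (F x₀) + σ := by
  classical
  set θ := κ'' * lr with hθdef
  have hθ0 : 0 ≤ θ := mul_nonneg hκ''.le hlr
  have h1θ : 0 < 1 - θ := by linarith
  set d₀ := infDist (y - G x₀) (F x₀) with hd₀
  have hd₀0 : 0 ≤ d₀ := infDist_nonneg
  set μ := κ'' / (1 - θ) with hμdef
  have hμ0 : 0 < μ := div_pos hκ'' h1θ
  set ρ := (1 + θ) / 2 with hρdef
  have hθρ : θ < ρ := by rw [hρdef]; linarith
  have hρ1 : ρ < 1 := by rw [hρdef]; linarith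
  have hρ0 : 0 < ρ := by rw [hρdef]; linarith
  have hρθ : 0 < ρ - θ := by linarith
  set C := ρ / (ρ - θ) with hCdef
  have hC1 : 1 ≤ C := by rw [hCdef, le_div_iff₀ hρθ]; linarith
  have hC0 : 0 < C := lt_of_lt_of_le one_pos hC1
  have hCkey : θ * C + ρ = C * ρ := by
    rw [hCdef]; field_simp; ring
  have h1ρ : 0 < 1 - ρ := by linarith
  set E := C * ρ / (1 - ρ) with hEdef
  have hE0 : 0 < E := div_pos (mul_pos hC0 hρ0) h1ρ
  set σ'' := σ / (E + 1) with hσ''def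
  have hσ''0 : 0 < σ'' := div_pos hσ (by linarith)
  have hB' : μ * d₀ + E * σ'' ≤ μ * d₀ + σ := by
    have : E * σ'' ≤ σ := by
      rw [hσ''def, mul_div_assoc']
      rw [div_le_iff₀ (by linarith : (0:ℝ) < E + 1)]
      nlinarith
    linarith
  set sB : ℕ → ℝ := fun n => θ ^ n * (κ'' * d₀) + C * σ'' * ρ * ρ ^ n with hsBdef
  have hsB0 : ∀ n, 0 ≤ sB n := by
    intro n; rw [hsBdef]; positivity
  set dB : ℕ → ℝ := fun n => Nat.rec d₀ (fun k _ => lr * sB k) n with hdBdef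
  have hdB0 : dB 0 = d₀ := rfl
  have hdBs : ∀ k, dB (k + 1) = lr * sB k := fun k => rfl
  have hstepB : ∀ n, κ'' * dB n + σ'' * ρ * ρ ^ n ≤ sB n := by
    intro n
    cases n with
    | zero =>
      simp only [hdB0, hsBdef, pow_zero]
      nlinarith [mul_nonneg (mul_nonneg (by linarith : (0:ℝ) ≤ C - 1) hσ''0.le) hρ0.le]
    | succ k =>
      rw [hdBs k]
      simp only [hsBdef]
      have heq : κ'' * (lr * (θ ^ k * (κ'' * d₀) + C * σ'' * ρ * ρ ^ k)) + σ'' * ρ * ρ ^ (k + 1)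
          = θ ^ (k + 1) * (κ'' * d₀) + C * σ'' * ρ * ρ ^ (k + 1) := by
        linear_combination (θ ^ k * (κ'' * d₀) + C * σ'' * ρ * ρ ^ k) * hθdef.symm
          + σ'' * ρ * ρ ^ k * hCkey
      linarith [heq]
  set psum : ℕ → ℝ := fun n => ∑ j ∈ Finset.range n, sB j with hpsumdef
  have hpsum : ∀ n, psum n ≤ μ * d₀ + E * σ'' := by
    intro n
    rw [hpsumdef]
    simp only [hsBdef]
    rw [Finset.sum_add_distrib, ← Finset.sum_mul, ← Finset.mul_sum]
    have h1 : (∑ j ∈ Finset.range n, θ ^ j) * (κ'' * d₀) ≤ (1 / (1 - θ)) * (κ'' * d₀) :=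
      mul_le_mul_of_nonneg_right (geo_sum_le' hθ0 (by linarith) n)
        (by positivity)
    have h2 : C * σ'' * ρ * (∑ j ∈ Finset.range n, ρ ^ j) ≤ C * σ'' * ρ * (1 / (1 - ρ)) :=
      mul_le_mul_of_nonneg_left (geo_sum_le' hρ0.le hρ1 n) (by positivity)
    have e1 : μ * d₀ = (1 / (1 - θ)) * (κ'' * d₀) := by rw [hμdef]; ring
    have e2 : E * σ'' = C * σ'' * ρ * (1 / (1 - ρ)) := by rw [hEdef]; ring
    rw [e1, e2]
    exact add_le_add h1 h2
  set Q : ℕ → X → X → Prop := fun n z z' =>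
    y - G z ∈ F z' ∧ dist z z' ≤ κ'' * infDist (y - G z) (F z) + σ'' * ρ * ρ ^ n with hQdef
  set seq : ℕ → X := fun n =>
    Nat.rec x₀ (fun k xk => if h : ∃ z, Q k xk z then h.choose else xk) n with hseqdef
  have hseq0 : seq 0 = x₀ := rfl
  have hseqs : ∀ n, seq (n + 1) =
      if h : ∃ z, Q n (seq n) z then h.choose else seq n := fun n => rfl
  have mk : ∀ n, (F (seq n)).Nonempty → infDist (y - G (seq n)) (F (seq n)) ≤ dB n →
      dist x₀ (seq n) ≤ psum n →
      Q n (seq n) (seq (n + 1)) ∧ dist (seq n) (seq (n + 1)) ≤ sB n := by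
    intro n h1 h2 h3
    have hball := hloc (seq n) (h3.trans ((hpsum n).trans hB'))
    obtain ⟨x', hx'F, hx'd⟩ := hreg (seq n) hball.1 (y - G (seq n)) hball.2 h1
      (σ'' * ρ * ρ ^ n) (by positivity)
    have hex : ∃ z, Q n (seq n) z := ⟨x', hx'F, hx'd⟩
    have heq : seq (n + 1) = hex.choose := by rw [hseqs n, dif_pos hex]
    have hq : Q n (seq n) (seq (n + 1)) := heq ▸ hex.choose_spec
    refine ⟨hq, hq.2.trans ?_⟩
    have h5 : κ'' * infDist (y - G (seq n)) (F (seq n)) ≤ κ'' * dB n :=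
      mul_le_mul_of_nonneg_left h2 hκ''.le
    linarith [hstepB n]
  have J : ∀ n, (F (seq n)).Nonempty ∧ infDist (y - G (seq n)) (F (seq n)) ≤ dB n ∧
      dist x₀ (seq n) ≤ psum n := by
    intro n
    induction n with
    | zero =>
      refine ⟨hne, le_of_eq ?_, ?_⟩
      · rw [hseq0, hdB0]
      · rw [hseq0, dist_self]
        simp [hpsumdef]
    | succ k ih =>
      obtain ⟨h1, h2, h3⟩ := ih
      obtain ⟨hq, hsb⟩ := mk k h1 h2 h3
      have hball_k := hloc (seq k) (h3.trans ((hpsum k).trans hB'))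
      have h3' : dist x₀ (seq (k + 1)) ≤ psum (k + 1) := by
        have := dist_triangle x₀ (seq k) (seq (k + 1))
        have e : psum (k + 1) = psum k + sB k := by
          rw [hpsumdef]; exact Finset.sum_range_succ _ _
        rw [e]; linarith
      have hball_k1 := hloc (seq (k + 1)) (h3'.trans ((hpsum (k + 1)).trans hB'))
      refine ⟨⟨_, hq.1⟩, ?_, h3'⟩
      rw [hdBs k]
      calc infDist (y - G (seq (k + 1))) (F (seq (k + 1)))
          ≤ dist (y - G (seq (k + 1))) (y - G (seq k)) := infDist_le_dist_of_mem hq.1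
        _ = ‖G (seq k) - G (seq (k + 1))‖ := by
            rw [dist_eq_norm, show y - G (seq (k + 1)) - (y - G (seq k))
              = G (seq k) - G (seq (k + 1)) by abel]
        _ ≤ lr * ‖seq k - seq (k + 1)‖ := hlip (seq (k + 1)) hball_k1.1 (seq k) hball_k.1
        _ = lr * dist (seq k) (seq (k + 1)) := by rw [dist_eq_norm]
        _ ≤ lr * sB k := mul_le_mul_of_nonneg_left hsb hlr
  have hsb' : ∀ n, dist (seq n) (seq (n + 1)) ≤ (κ'' * d₀ + C * σ'' * ρ) * ρ ^ n := by
    intro n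
    obtain ⟨h1, h2, h3⟩ := J n
    obtain ⟨-, hsb⟩ := mk n h1 h2 h3
    refine hsb.trans ?_
    have hpow : θ ^ n ≤ ρ ^ n := pow_le_pow_left₀ hθ0 hθρ.le n
    have h4 : θ ^ n * (κ'' * d₀) ≤ ρ ^ n * (κ'' * d₀) :=
      mul_le_mul_of_nonneg_right hpow (by positivity)
    calc sB n = θ ^ n * (κ'' * d₀) + C * σ'' * ρ * ρ ^ n := by rw [hsBdef]
      _ ≤ ρ ^ n * (κ'' * d₀) + C * σ'' * ρ * ρ ^ n := by linarith
      _ = (κ'' * d₀ + C * σ'' * ρ) * ρ ^ n := by ring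
  have hcau : CauchySeq seq := cauchySeq_of_le_geometric ρ _ hρ1 hsb'
  obtain ⟨xl, hxl⟩ := cauchySeq_tendsto_of_complete hcau
  have hdist : ∀ n, dist x₀ (seq n) ≤ μ * d₀ + E * σ'' := fun n =>
    (J n).2.2.trans (hpsum n)
  have hdl : dist x₀ xl ≤ μ * d₀ + E * σ'' :=
    le_of_tendsto (tendsto_const_nhds.dist hxl) (Filter.Eventually.of_forall hdist)
  have hdlB : dist x₀ xl ≤ μ * d₀ + σ := hdl.trans hB'
  have hballl := hloc xl hdlB
  have hballn : ∀ n, seq n ∈ ball xbar ε₀ := fun n =>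
    (hloc (seq n) ((hdist n).trans hB')).1
  have hGl : Tendsto (fun n => G (seq n)) atTop (nhds (G xl)) := by
    rw [tendsto_iff_dist_tendsto_zero]
    apply squeeze_zero (fun n => dist_nonneg) (g := fun n => lr * dist (seq n) xl)
    · intro n
      have := hlip xl hballl.1 (seq n) (hballn n)
      rw [dist_eq_norm]
      calc ‖G (seq n) - G xl‖ ≤ lr * ‖seq n - xl‖ := this
        _ = lr * dist (seq n) xl := by rw [dist_eq_norm]
    · have := (tendsto_iff_dist_tendsto_zero.mp hxl).const_mul lr
      simpa using this
  have hpair : Tendsto (fun n => (seq (n + 1), y - G (seq n))) atTop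
      (nhds (xl, y - G xl)) := by
    refine Filter.Tendsto.prodMk_nhds ?_ (tendsto_const_nhds.sub hGl)
    exact hxl.comp (tendsto_add_atTop_nat 1)
  have hmemK : ∀ n, (seq (n + 1), y - G (seq n)) ∈ K := by
    intro n
    obtain ⟨h1, h2, h3⟩ := J n
    exact hKmem _ (hballn (n + 1)) _ (hloc (seq n) ((hdist n).trans hB')).2
      (mk n h1 h2 h3).1.1
  have hlimK : (xl, y - G xl) ∈ K :=
    hK.mem_of_tendsto hpair (Filter.Eventually.of_forall hmemK)
  exact ⟨xl, hKsub _ hlimK, hdlB⟩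

theorem metric_regularity_stable_under_lipschitz_perturbation
    {X Y : Type*} [NormedAddCommGroup X] [NormedSpace ℝ X] [CompleteSpace X]
    [NormedAddCommGroup Y] [NormedSpace ℝ Y] [CompleteSpace Y]
    (F : X → Set Y) (xbar : X) (ybar : Y) (hmem : ybar ∈ F xbar)
    (hclosed : ∃ W ∈ nhds ((xbar, ybar) : X × Y),
      IsClosed ({p : X × Y | p.2 ∈ F p.1} ∩ W))
    (G : X → Y) (κ lam : ℝ)
    (hκ : regModulus F xbar ybar < ENNReal.ofReal κ)
    (hlam : lipModulus G xbar < ENNReal.ofReal lam) (hlt : lam < κ⁻¹) :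
    regModulus (fun x => (fun v => v + G x) '' F x) xbar (ybar + G xbar)
      < ENNReal.ofReal (κ⁻¹ - lam)⁻¹ := by
  classical
  have hκpos : 0 < κ := ENNReal.ofReal_pos.mp (lt_of_le_of_lt zero_le hκ)
  have hlampos : 0 < lam := ENNReal.ofReal_pos.mp (lt_of_le_of_lt zero_le hlam)
  rw [regModulus, iInf_lt_iff] at hκ
  obtain ⟨κ₀, hκ⟩ := hκ
  rw [iInf_lt_iff] at hκ
  obtain ⟨hPκ, hκlt⟩ := hκ
  have hk0κ : (κ₀ : ℝ) < κ := by
    have := (ENNReal.lt_ofReal_iff_toReal_lt ENNReal.coe_ne_top).mp hκlt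
    simpa using this
  rw [lipModulus, iInf_lt_iff] at hlam
  obtain ⟨lam0, hlam⟩ := hlam
  rw [iInf_lt_iff] at hlam
  obtain ⟨hPl, hllt⟩ := hlam
  have hl0lam : (lam0 : ℝ) < lam := by
    have := (ENNReal.lt_ofReal_iff_toReal_lt ENNReal.coe_ne_top).mp hllt
    simpa using this
  set k0 : ℝ := (κ₀ : ℝ) with hk0def
  set l0 : ℝ := (lam0 : ℝ) with hl0def
  have hk0 : 0 ≤ k0 := κ₀.2
  have hl0 : 0 ≤ l0 := lam0.2
  obtain ⟨εκ, hεκ, hregεκ⟩ := hPκ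
  obtain ⟨εl, hεl, hlipεl⟩ := hPl
  obtain ⟨W, hW, hWclosed⟩ := hclosed
  obtain ⟨r, hr, hrW⟩ := Metric.mem_nhds_iff.mp hW
  set ε₀ : ℝ := min εκ (min εl r) with hε₀def
  have hε₀ : 0 < ε₀ := lt_min hεκ (lt_min hεl hr)
  have hε₀κ : ε₀ ≤ εκ := min_le_left _ _
  have hε₀l : ε₀ ≤ εl := (min_le_right _ _).trans (min_le_left _ _)
  have hε₀r : ε₀ ≤ r := (min_le_right _ _).trans (min_le_right _ _)
  -- constants
  set κ'' : ℝ := (k0 + κ) / 2 with hκ''def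
  have hκ''pos : 0 < κ'' := by rw [hκ''def]; linarith
  have hk0κ'' : k0 ≤ κ'' := by rw [hκ''def]; linarith
  have hκ''κ : κ'' < κ := by rw [hκ''def]; linarith
  have hκinv : κ * κ⁻¹ = 1 := mul_inv_cancel₀ hκpos.ne'
  have hκlam : κ * lam < 1 := by
    have := mul_lt_mul_of_pos_left hlt hκpos
    rw [hκinv] at this; exact this
  have hθ1 : κ'' * l0 < 1 := by
    have h1 : κ'' * l0 ≤ κ'' * lam := mul_le_mul_of_nonneg_left hl0lam.le hκ''pos.le
    have h2 : κ'' * lam < κ * lam := mul_lt_mul_of_pos_right hκ''κ hlampos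
    linarith
  set μ : ℝ := κ'' / (1 - κ'' * l0) with hμdef
  have hμpos : 0 < μ := div_pos hκ''pos (by linarith)
  have hinv : 0 < κ⁻¹ - lam := sub_pos.mpr hlt
  have htar : μ < (κ⁻¹ - lam)⁻¹ := by
    rw [show (κ⁻¹ - lam)⁻¹ = 1 / (κ⁻¹ - lam) from (one_div _).symm, lt_div_iff₀ hinv, hμdef,
      div_mul_eq_mul_div, div_lt_one (by linarith : (0:ℝ) < 1 - κ'' * l0)]
    have h4 : κ'' * κ⁻¹ < 1 := by
      have := mul_lt_mul_of_pos_right hκ''κ (inv_pos.mpr hκpos)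
      rw [hκinv] at this; exact this
    have h5 : κ'' * l0 < κ'' * lam := by
      rcases eq_or_lt_of_le hl0 with h | h
      · rw [← h, mul_zero]; exact mul_pos hκ''pos hlampos
      · exact mul_lt_mul_of_pos_left hl0lam hκ''pos
    nlinarith
  set μN : NNReal := ⟨μ, hμpos.le⟩ with hμNdef
  -- the helper hypotheses for key_exists
  have hreg' : ∀ xx ∈ ball xbar ε₀, ∀ yy ∈ ball ybar ε₀, (F xx).Nonempty →
      ∀ η > (0:ℝ), ∃ x', yy ∈ F x' ∧ dist xx x' ≤ κ'' * infDist yy (F xx) + η := by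
    intro xx hxx yy hyy hne η hη
    have h1 := hregεκ xx (mem_ball.mpr (lt_of_lt_of_le (mem_ball.mp hxx) hε₀κ)) yy
      (mem_ball.mpr (lt_of_lt_of_le (mem_ball.mp hyy) hε₀κ))
    have hfin : EMetric.infEdist yy (F xx) = ENNReal.ofReal (infDist yy (F xx)) :=
      (ENNReal.ofReal_toReal (Metric.infEdist_ne_top hne)).symm
    have hd : 0 ≤ infDist yy (F xx) := infDist_nonneg
    have h2 : EMetric.infEdist xx {x' | yy ∈ F x'} <
        ENNReal.ofReal (κ'' * infDist yy (F xx) + η) := by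
      refine lt_of_le_of_lt h1 ?_
      rw [hfin, show ((κ₀ : ENNReal)) = ENNReal.ofReal k0 from
        (ENNReal.ofReal_coe_nnreal).symm, ← ENNReal.ofReal_mul hk0]
      refine (ENNReal.ofReal_lt_ofReal_iff (by positivity)).mpr ?_
      nlinarith [mul_le_mul_of_nonneg_right hk0κ'' hd]
    obtain ⟨x', hx's, hx'e⟩ := EMetric.infEdist_lt_iff.mp h2
    refine ⟨x', hx's, ?_⟩
    rw [edist_dist] at hx'e
    exact ((ENNReal.ofReal_lt_ofReal_iff_of_nonneg dist_nonneg).mp hx'e).le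
  have hlip' : ∀ xx ∈ ball xbar ε₀, ∀ x' ∈ ball xbar ε₀, ‖G x' - G xx‖ ≤ l0 * ‖x' - xx‖ := by
    intro xx hxx x' hx'
    exact hlipεl xx (mem_ball.mpr (lt_of_lt_of_le (mem_ball.mp hxx) hε₀l)) x'
      (mem_ball.mpr (lt_of_lt_of_le (mem_ball.mp hx') hε₀l))
  set K : Set (X × Y) := {p : X × Y | p.2 ∈ F p.1} ∩ W with hKdef
  have hK : IsClosed K := hWclosed
  have hKsub : ∀ p ∈ K, p.2 ∈ F p.1 := fun p hp => hp.1
  have hKmem : ∀ xx ∈ ball xbar ε₀, ∀ yy ∈ ball ybar ε₀, yy ∈ F xx → (xx, yy) ∈ K := by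
    intro xx hxx yy hyy hm
    refine ⟨hm, hrW ?_⟩
    rw [← ball_prod_same]
    exact ⟨mem_ball.mpr (lt_of_lt_of_le (mem_ball.mp hxx) hε₀r),
      mem_ball.mpr (lt_of_lt_of_le (mem_ball.mp hyy) hε₀r)⟩
  -- the radius δ
  set δ : ℝ := ε₀ / ((4 + μ) * (1 + l0)) with hδdef
  have hD : (0:ℝ) < (4 + μ) * (1 + l0) := by nlinarith
  have hδpos : 0 < δ := div_pos hε₀ hD
  have hδD : δ * ((4 + μ) * (1 + l0)) = ε₀ := div_mul_cancel₀ _ hD.ne'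
  have fact1 : δ * (3 + μ) ≤ ε₀ := by
    nlinarith [mul_nonneg hδpos.le hl0, mul_nonneg (mul_nonneg hδpos.le hμpos.le) hl0,
      mul_nonneg hδpos.le hμpos.le]
  have fact2 : δ + l0 * (δ * (3 + μ)) ≤ ε₀ := by
    nlinarith [mul_nonneg hδpos.le hl0, mul_nonneg (mul_nonneg hδpos.le hμpos.le) hl0,
      mul_nonneg hδpos.le hμpos.le]
  -- the regularity estimate for the perturbed map
  have hprop : ∃ ε > (0:ℝ), ∀ x ∈ ball xbar ε, ∀ y ∈ ball (ybar + G xbar) ε,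
      EMetric.infEdist x {x' | y ∈ (fun v => v + G x') '' F x'} ≤
        (μN : ENNReal) * EMetric.infEdist y ((fun v => v + G x) '' F x) := by
    refine ⟨δ, hδpos, ?_⟩
    intro x hx yy hyy
    have hSset : {x' | yy ∈ (fun v => v + G x') '' F x'} = {x' | yy - G x' ∈ F x'} := by
      ext z
      simp only [Set.mem_setOf_eq, Set.mem_image]
      constructor
      · rintro ⟨v, hv, rfl⟩
        simpa [add_sub_cancel_right] using hv
      · intro h
        exact ⟨yy - G z, h, sub_add_cancel _ _⟩
    have hRHS : EMetric.infEdist yy ((fun v => v + G x) '' F x) =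
        EMetric.infEdist (yy - G x) (F x) := by
      conv_lhs => rw [show yy = (yy - G x) + G x from (sub_add_cancel _ _).symm]
      exact EMetric.infEdist_image (isometry_add_right (G x))
    rcases (F x).eq_empty_or_nonempty with hFx | hFx
    · have : EMetric.infEdist yy ((fun v => v + G x) '' F x) = ⊤ := by
        rw [hFx]; simp [EMetric.infEdist_empty]; exact EMetric.infEdist_empty
      rw [this, ENNReal.mul_top (by
        rw [ne_eq, ENNReal.coe_eq_zero, hμNdef]
        exact fun h => hμpos.ne' (congrArg NNReal.toReal h) : (μN : ENNReal) ≠ 0)]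
      exact le_top
    · set d₀ : ℝ := infDist (yy - G x) (F x) with hd₀def
      have hd₀0 : 0 ≤ d₀ := infDist_nonneg
      have hRHS2 : EMetric.infEdist yy ((fun v => v + G x) '' F x) = ENNReal.ofReal d₀ := by
        rw [hRHS, hd₀def, Metric.infDist, ENNReal.ofReal_toReal (Metric.infEdist_ne_top hFx)]; rfl
      rw [hSset, hRHS2, show (μN : ENNReal) * ENNReal.ofReal d₀ = ENNReal.ofReal (μ * d₀) by
        rw [ENNReal.ofReal_mul hμpos.le, ENNReal.ofReal_eq_coe_nnreal hμpos.le]; rfl]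
      apply ENNReal.le_of_forall_pos_le_add
      intro ε' hε' _
      set σ : ℝ := min (ε' : ℝ) δ with hσdef
      have hσpos : 0 < σ := lt_min hε' hδpos
      have hσδ : σ ≤ δ := min_le_right _ _
      suffices h : ∃ x', (yy - G x' ∈ F x') ∧ dist x x' ≤ μ * d₀ + σ by
        obtain ⟨x', hx'1, hx'2⟩ := h
        calc EMetric.infEdist x {x' | yy - G x' ∈ F x'} ≤ edist x x' :=
            EMetric.infEdist_le_edist_of_mem hx'1
          _ = ENNReal.ofReal (dist x x') := edist_dist _ _
          _ ≤ ENNReal.ofReal (μ * d₀ + σ) := ENNReal.ofReal_le_ofReal hx'2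
          _ ≤ ENNReal.ofReal (μ * d₀) + ENNReal.ofReal σ := ENNReal.ofReal_add_le
          _ ≤ ENNReal.ofReal (μ * d₀) + ↑ε' := by
              refine add_le_add_right ?_ _
              rw [← ENNReal.ofReal_coe_nnreal]
              exact ENNReal.ofReal_le_ofReal (min_le_left _ _)
      have hxδ : dist x xbar < δ := mem_ball.mp hx
      have hyyδ : dist yy (ybar + G xbar) < δ := mem_ball.mp hyy
      have e2 : ∀ z : Y, dist (yy - z) ybar = dist yy (ybar + z) := by
        intro z
        rw [dist_eq_norm, dist_eq_norm, show yy - z - ybar = yy - (ybar + z) by abel]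
      have hμt : μ * (δ * (1 + μ) / μ) = δ * (1 + μ) := by field_simp
      by_cases hcase : d₀ ≤ δ * (1 + μ) / μ
      · -- iterate from x itself
        have hlocA : ∀ z : X, dist x z ≤ μ * infDist (yy - G x) (F x) + σ →
            z ∈ ball xbar ε₀ ∧ yy - G z ∈ ball ybar ε₀ := by
          intro z hz
          rw [← hd₀def] at hz
          have h5 : μ * d₀ ≤ δ * (1 + μ) := by
            rw [← hμt]; exact mul_le_mul_of_nonneg_left hcase hμpos.le
          have hz3 : dist z xbar < δ * (3 + μ) := by
            have ht := dist_triangle z x xbar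
            rw [dist_comm z x] at ht
            nlinarith
          have hz1 : z ∈ ball xbar ε₀ := mem_ball.mpr (lt_of_lt_of_le hz3 fact1)
          refine ⟨hz1, mem_ball.mpr ?_⟩
          have hGz : ‖G z - G xbar‖ ≤ l0 * ‖z - xbar‖ := hlip' xbar (mem_ball_self hε₀) z hz1
          have ht2 := dist_triangle (yy - G z) (yy - G xbar) ybar
          have eA : dist (yy - G z) (yy - G xbar) = ‖G z - G xbar‖ := by
            rw [dist_eq_norm, show yy - G z - (yy - G xbar) = -(G z - G xbar) by abel,
              norm_neg]
          have eB : ‖z - xbar‖ = dist z xbar := (dist_eq_norm _ _).symm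
          have h6 : l0 * ‖z - xbar‖ ≤ l0 * (δ * (3 + μ)) := by
            rw [eB]; exact mul_le_mul_of_nonneg_left hz3.le hl0
          have h7 := e2 (G xbar)
          calc dist (yy - G z) ybar ≤ dist (yy - G z) (yy - G xbar) + dist (yy - G xbar) ybar :=
              ht2
            _ = ‖G z - G xbar‖ + dist yy (ybar + G xbar) := by rw [eA, h7]
            _ < l0 * (δ * (3 + μ)) + δ := by
                have := hGz.trans h6
                linarith
            _ ≤ ε₀ := by linarith
        obtain ⟨x', h1, h2⟩ := key_exists F G xbar ybar ε₀ κ'' l0 hκ''pos hl0 hθ1 hreg'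
          hlip' K hK hKsub hKmem yy x hFx σ hσpos hlocA
        exact ⟨x', h1, by rw [← hd₀def] at h2; exact h2⟩
      · -- iterate from xbar
        push_neg at hcase
        have hdt2 : infDist (yy - G xbar) (F xbar) < δ := by
          have := infDist_le_dist_of_mem hmem (x := yy - G xbar)
          rw [e2 (G xbar)] at this
          linarith
        have hlocB : ∀ z : X, dist xbar z ≤ μ * infDist (yy - G xbar) (F xbar) + σ →
            z ∈ ball xbar ε₀ ∧ yy - G z ∈ ball ybar ε₀ := by
          intro z hz
          have h5 : μ * infDist (yy - G xbar) (F xbar) ≤ μ * δ :=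
            mul_le_mul_of_nonneg_left hdt2.le hμpos.le
          have hz3 : dist z xbar < δ * (3 + μ) := by
            rw [dist_comm z xbar]
            nlinarith
          have hz1 : z ∈ ball xbar ε₀ := mem_ball.mpr (lt_of_lt_of_le hz3 fact1)
          refine ⟨hz1, mem_ball.mpr ?_⟩
          have hGz : ‖G z - G xbar‖ ≤ l0 * ‖z - xbar‖ := hlip' xbar (mem_ball_self hε₀) z hz1
          have ht2 := dist_triangle (yy - G z) (yy - G xbar) ybar
          have eA : dist (yy - G z) (yy - G xbar) = ‖G z - G xbar‖ := by
            rw [dist_eq_norm, show yy - G z - (yy - G xbar) = -(G z - G xbar) by abel,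
              norm_neg]
          have eB : ‖z - xbar‖ = dist z xbar := (dist_eq_norm _ _).symm
          have h6 : l0 * ‖z - xbar‖ ≤ l0 * (δ * (3 + μ)) := by
            rw [eB]; exact mul_le_mul_of_nonneg_left hz3.le hl0
          have h7 := e2 (G xbar)
          calc dist (yy - G z) ybar ≤ dist (yy - G z) (yy - G xbar) + dist (yy - G xbar) ybar :=
              ht2
            _ = ‖G z - G xbar‖ + dist yy (ybar + G xbar) := by rw [eA, h7]
            _ < l0 * (δ * (3 + μ)) + δ := by
                have := hGz.trans h6
                linarith
            _ ≤ ε₀ := by linarith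
        obtain ⟨x'', h1, h2⟩ := key_exists F G xbar ybar ε₀ κ'' l0 hκ''pos hl0 hθ1 hreg'
          hlip' K hK hKsub hKmem yy xbar ⟨ybar, hmem⟩ σ hσpos hlocB
        refine ⟨x'', h1, ?_⟩
        have ht := dist_triangle x xbar x''
        have h5 : μ * infDist (yy - G xbar) (F xbar) ≤ μ * δ :=
          mul_le_mul_of_nonneg_left hdt2.le hμpos.le
        have h8 : δ * (1 + μ) < μ * d₀ := by
          have := mul_lt_mul_of_pos_left hcase hμpos
          rw [hμt] at this
          exact this
        nlinarith
  calc regModulus (fun x => (fun v => v + G x) '' F x) xbar (ybar + G xbar)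
      ≤ (μN : ENNReal) := iInf₂_le μN hprop
    _ < ENNReal.ofReal (κ⁻¹ - lam)⁻¹ := by
        rw [ENNReal.lt_ofReal_iff_toReal_lt ENNReal.coe_ne_top]
        exact htar
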